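/- Work on a probability space (Ω, 𝒜, P) equipped with a filtration (ℱ_k)_{k∈ℕ} of sub-σ-algebras of 𝒜. Let c > 0 and B ≥ 0, and let N : Ω → ℕ ∪ {∞} satisfy {k < N} ∈ ℱ_k for every k. For each k ∈ ℕ let S_k, F_k, M_k ∈ 𝒜 be events, set E_k := F_k ∩ M_k, let Λ_k ∈ ℱ_k be an event, and let D_k be an integrable random variable. Assume that almost surely, for every k ∈ ℕ: (i) 1_{S_k}·1_{F_k}·D_k ≥ 0; (ii) if k < N then 1_{S_k}·1_{E_k}·1_{Λ_k}·D_k ≥ c·1_{S_k}·1_{E_k}·1_{Λ_k}; (iii) (1 − 1_{S_k})·D_k = 0; (iv) Σ_{k=0}^{ℓ} D_k ≤ B for every ℓ ∈ ℕ; and assume moreover that for every k, E[1_{S_k}·(1 − 1_{F_k})·D_k | ℱ_k] ≥ 0 almost surely. Then E[Σ_{k<N} 1_{S_k}·1_{E_k}·1_{Λ_k}] ≤ B/c + 1. -/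
import Mathlib


open MeasureTheory
open scoped ENNReal

/-- Lemma 3.6 of the paper (abstract form): the expected number of accurate successful
iterations with large radius before `N` is at most `B/c + 1`. -/
theorem expected_accurate_successful_le
    {Ω : Type*} {mΩ : MeasurableSpace Ω} (μ : Measure Ω) [IsProbabilityMeasure μ]
    (ℱ : Filtration ℕ mΩ)
    (c B : ℝ) (hc : 0 < c) (hB : 0 ≤ B)
    (N : Ω → ℕ∞)
    (hN : ∀ k, MeasurableSet[ℱ k] {ω | (k : ℕ∞) < N ω})
    (S F M : ℕ → Set Ω)
    (hSm : ∀ k, MeasurableSet (S k)) (hFm : ∀ k, MeasurableSet (F k))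
    (hMm : ∀ k, MeasurableSet (M k))
    (Λ : ℕ → Set Ω) (hΛ : ∀ k, MeasurableSet[ℱ k] (Λ k))
    (D : ℕ → Ω → ℝ) (hD : ∀ k, Integrable (D k) μ)
    (h1 : ∀ᵐ ω ∂μ, ∀ k : ℕ, ω ∈ S k → ω ∈ F k → 0 ≤ D k ω)
    (h2 : ∀ᵐ ω ∂μ, ∀ k : ℕ, (k : ℕ∞) < N ω →
      ω ∈ S k → ω ∈ F k ∩ M k → ω ∈ Λ k → c ≤ D k ω)
    (h3 : ∀ᵐ ω ∂μ, ∀ k : ℕ, ω ∉ S k → D k ω = 0)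
    (h4 : ∀ᵐ ω ∂μ, ∀ ℓ : ℕ, ∑ k ∈ Finset.range (ℓ + 1), D k ω ≤ B)
    (h5 : ∀ k, ∀ᵐ ω ∂μ,
      0 ≤ (μ[fun ω' => (S k).indicator (fun _ => (1 : ℝ)) ω' *
            (1 - (F k).indicator (fun _ => (1 : ℝ)) ω') * D k ω' | ℱ k]) ω) :
    (∫⁻ ω, ∑' (k : ℕ), ({ω' | (k : ℕ∞) < N ω'}.indicator (fun _ => (1 : ℝ≥0∞)) ω) *
        ((S k).indicator (fun _ => (1 : ℝ≥0∞)) ω) *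
        ((F k ∩ M k).indicator (fun _ => (1 : ℝ≥0∞)) ω) *
        ((Λ k).indicator (fun _ => (1 : ℝ≥0∞)) ω) ∂μ)
      ≤ ENNReal.ofReal (B / c + 1) := by
  classical
  -- The good event at time `k`
  set A : ℕ → Set Ω := fun k =>
    {ω | (k : ℕ∞) < N ω} ∩ S k ∩ (F k ∩ M k) ∩ Λ k with hA
  have hAm : ∀ k, MeasurableSet (A k) := fun k =>
    ((((ℱ.le k _ (hN k)).inter (hSm k)).inter ((hFm k).inter (hMm k))).inter
      (ℱ.le k _ (hΛ k)))
  -- Rewrite the integrand as a sum of indicators of `A k`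
  have hint : ∀ ω, (∑' (k : ℕ),
      ({ω' | (k : ℕ∞) < N ω'}.indicator (fun _ => (1 : ℝ≥0∞)) ω) *
        ((S k).indicator (fun _ => (1 : ℝ≥0∞)) ω) *
        ((F k ∩ M k).indicator (fun _ => (1 : ℝ≥0∞)) ω) *
        ((Λ k).indicator (fun _ => (1 : ℝ≥0∞)) ω))
      = ∑' (k : ℕ), (A k).indicator (fun _ => (1 : ℝ≥0∞)) ω := by
    intro ω
    refine tsum_congr fun k => ?_
    by_cases hn : ω ∈ {ω' | (k : ℕ∞) < N ω'} <;>
    by_cases hs : ω ∈ S k <;>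
    by_cases hf : ω ∈ F k ∩ M k <;>
    by_cases hl : ω ∈ Λ k <;>
    simp [Set.indicator_apply, hn, hs, hf, hl, hA, Set.mem_inter_iff]
  -- Key inequality: `c * μ (A k) ≤ ∫ D k`
  have key : ∀ k : ℕ, c * (μ (A k)).toReal ≤ ∫ ω, D k ω ∂μ := by
    intro k
    -- decompose D k a.e.
    have hdec : (fun ω => D k ω)
        =ᵐ[μ] fun ω => (S k ∩ F k).indicator (D k) ω
          + (S k ∩ (F k)ᶜ).indicator (D k) ω := by
      filter_upwards [h3] with ω h3ω
      by_cases hs : ω ∈ S k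
      · by_cases hf : ω ∈ F k <;>
          simp [Set.indicator_apply, hs, hf]
      · simp [Set.indicator_apply, hs, h3ω k hs]
    have hI1 : Integrable ((S k ∩ F k).indicator (D k)) μ :=
      (hD k).indicator ((hSm k).inter (hFm k))
    have hI2 : Integrable ((S k ∩ (F k)ᶜ).indicator (D k)) μ :=
      (hD k).indicator ((hSm k).inter (hFm k).compl)
    have hsplit : ∫ ω, D k ω ∂μ
        = (∫ ω, (S k ∩ F k).indicator (D k) ω ∂μ)
          + ∫ ω, (S k ∩ (F k)ᶜ).indicator (D k) ω ∂μ := by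
      rw [integral_congr_ae hdec, integral_add hI1 hI2]
    -- the second term is nonnegative, by the conditional expectation hypothesis
    have hfun : (fun ω' => (S k).indicator (fun _ => (1 : ℝ)) ω' *
            (1 - (F k).indicator (fun _ => (1 : ℝ)) ω') * D k ω')
        = (S k ∩ (F k)ᶜ).indicator (D k) := by
      funext ω
      by_cases hs : ω ∈ S k <;> by_cases hf : ω ∈ F k <;>
        simp [Set.indicator_apply, hs, hf]
    have h2nn : 0 ≤ ∫ ω, (S k ∩ (F k)ᶜ).indicator (D k) ω ∂μ := by
      have h5' := h5 k
      rw [hfun] at h5'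
      calc (0 : ℝ) ≤ ∫ ω, (μ[(S k ∩ (F k)ᶜ).indicator (D k) | ℱ k]) ω ∂μ :=
            integral_nonneg_of_ae h5'
        _ = ∫ ω, (S k ∩ (F k)ᶜ).indicator (D k) ω ∂μ := integral_condExp (ℱ.le k)
    -- the first term dominates `c * 1_{A k}`
    have h1ge : (fun ω => (A k).indicator (fun _ => c) ω)
        ≤ᵐ[μ] fun ω => (S k ∩ F k).indicator (D k) ω := by
      filter_upwards [h1, h2] with ω h1ω h2ω
      by_cases ha : ω ∈ A k
      · obtain ⟨⟨⟨hn, hs⟩, hfm⟩, hl⟩ := id ha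
        have hf : ω ∈ F k := hfm.1
        rw [Set.indicator_of_mem ha, Set.indicator_of_mem (Set.mem_inter hs hf) (D k)]
        exact h2ω k hn hs hfm hl
      · rw [Set.indicator_of_notMem ha]
        by_cases hsf : ω ∈ S k ∩ F k
        · rw [Set.indicator_of_mem hsf]
          exact h1ω k hsf.1 hsf.2
        · rw [Set.indicator_of_notMem hsf]
    have hIc : Integrable ((A k).indicator (fun _ => c)) μ :=
      (integrable_const c).indicator (hAm k)
    have h1le : c * (μ (A k)).toReal ≤ ∫ ω, (S k ∩ F k).indicator (D k) ω ∂μ := by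
      have := integral_mono_ae hIc hI1 h1ge
      rwa [integral_indicator_const c (hAm k), smul_eq_mul, mul_comm] at this
    linarith [hsplit, h2nn, h1le]
  -- Partial sums of measures are bounded by `B / c`
  have hsum : ∀ n : ℕ, ∑ k ∈ Finset.range n, (μ (A k)).toReal ≤ B / c := by
    intro n
    rcases Nat.eq_zero_or_pos n with hn | hn
    · simp [hn]; positivity
    obtain ⟨ℓ, rfl⟩ := Nat.exists_eq_add_of_lt hn
    rw [zero_add]
    have hEB : ∑ k ∈ Finset.range (ℓ + 1), ∫ ω, D k ω ∂μ ≤ B := by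
      rw [← integral_finset_sum _ fun k _ => hD k]
      calc ∫ ω, ∑ k ∈ Finset.range (ℓ + 1), D k ω ∂μ ≤ ∫ _, B ∂μ := by
            refine integral_mono_ae (integrable_finset_sum _ fun k _ => hD k)
              (integrable_const B) ?_
            filter_upwards [h4] with ω h4ω using h4ω ℓ
        _ = B := by simp
    have hcs : c * ∑ k ∈ Finset.range (ℓ + 1), (μ (A k)).toReal ≤ B := by
      rw [Finset.mul_sum]
      exact le_trans (Finset.sum_le_sum fun k _ => key k) hEB
    rw [le_div_iff₀ hc, mul_comm]
    exact hcs
  -- conclude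
  calc (∫⁻ ω, ∑' (k : ℕ), ({ω' | (k : ℕ∞) < N ω'}.indicator (fun _ => (1 : ℝ≥0∞)) ω) *
        ((S k).indicator (fun _ => (1 : ℝ≥0∞)) ω) *
        ((F k ∩ M k).indicator (fun _ => (1 : ℝ≥0∞)) ω) *
        ((Λ k).indicator (fun _ => (1 : ℝ≥0∞)) ω) ∂μ)
      = ∫⁻ ω, ∑' (k : ℕ), (A k).indicator (fun _ => (1 : ℝ≥0∞)) ω ∂μ := by
        refine lintegral_congr fun ω => ?_
        exact hint ω
    _ = ∑' (k : ℕ), ∫⁻ ω, (A k).indicator (fun _ => (1 : ℝ≥0∞)) ω ∂μ :=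
        lintegral_tsum fun k =>
          (measurable_one.indicator (hAm k)).aemeasurable
    _ = ∑' (k : ℕ), μ (A k) := by
        refine tsum_congr fun k => ?_
        rw [lintegral_indicator (hAm k), setLIntegral_one]
    _ ≤ ENNReal.ofReal (B / c) := by
        rw [ENNReal.tsum_eq_iSup_nat]
        refine iSup_le fun n => ?_
        have : ∑ k ∈ Finset.range n, μ (A k)
            = ENNReal.ofReal (∑ k ∈ Finset.range n, (μ (A k)).toReal) := by
          rw [ENNReal.ofReal_sum_of_nonneg fun k _ => ENNReal.toReal_nonneg]
          exact Finset.sum_congr rfl fun k _ =>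
            (ENNReal.ofReal_toReal (measure_ne_top μ _)).symm
        rw [this]
        exact ENNReal.ofReal_le_ofReal (hsum n)
    _ ≤ ENNReal.ofReal (B / c + 1) :=
        ENNReal.ofReal_le_ofReal (by linarith)
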